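/- For every prime p, the sequence e ↦ c(p^e) = σ(p^e)/d(p^e) is strictly increasing in e ≥ 1; moreover, for every odd prime p, c(p^e) converges to p/(p−2) as e → ∞. -/

import Mathlib

/-- The sum of all divisors of `n`. -/
def sigma1 (n : ℕ) : ℕ := ∑ d ∈ n.divisors, d

/-- The center of a deficient number `m`: `c(m) = σ(m)/d(m)` where `d(m) = 2m - σ(m)`. -/
def center (n : ℕ) : ℚ := (sigma1 n : ℚ) / (2 * (n : ℚ) - (sigma1 n : ℚ))

lemma sigma1_prime_pow {p : ℕ} (hp : p.Prime) (e : ℕ) :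
    (sigma1 (p ^ e) : ℚ) = ((p : ℚ) ^ (e + 1) - 1) / ((p : ℚ) - 1) := by
  have h1 : (1 : ℚ) < (p : ℚ) := by exact_mod_cast hp.one_lt
  have : sigma1 (p ^ e) = ∑ i ∈ Finset.range (e + 1), p ^ i := by
    unfold sigma1
    exact Nat.sum_divisors_prime_pow hp
  rw [this]
  push_cast
  rw [geom_sum_eq (by linarith)]

lemma center_prime_pow {p : ℕ} (hp : p.Prime) (e : ℕ) :
    center (p ^ e) = ((p : ℚ) - ((p : ℚ)⁻¹) ^ e) / (((p : ℚ) - 2) + ((p : ℚ)⁻¹) ^ e) := by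
  have h2 : (2 : ℚ) ≤ (p : ℚ) := by exact_mod_cast hp.two_le
  have hp0 : (p : ℚ) ≠ 0 := by positivity
  have hx : (0 : ℚ) < (p : ℚ) ^ e := by positivity
  have h1 : (p : ℚ) - 1 ≠ 0 := by linarith [h2]
  have hden : 2 * ((p : ℚ) ^ e) - (sigma1 (p ^ e) : ℚ) ≠ 0 := by
    rw [sigma1_prime_pow hp e]
    rw [ne_eq, sub_eq_zero]
    intro h
    have := (div_eq_iff h1).mp h.symm
    rw [pow_succ] at this
    nlinarith [mul_le_mul_of_nonneg_left h2 hx.le]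
  have hden2 : ((p : ℚ) - 2) + ((p : ℚ)⁻¹) ^ e ≠ 0 := by
    have : (0:ℚ) < ((p : ℚ)⁻¹) ^ e := by positivity
    nlinarith
  unfold center
  rw [sigma1_prime_pow hp e]
  push_cast
  rw [div_eq_div_iff]
  · field_simp
    have hq : (p:ℚ)^e * ((p:ℚ)⁻¹)^e = 1 := by rw [← mul_pow, mul_inv_cancel₀ hp0, one_pow]
    linear_combination (2 * (p:ℚ) - 2) * hq
  · rw [sigma1_prime_pow hp e] at hden; exact hden
  · rw [sigma1_prime_pow hp e] at hden; exact hden2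

/-- For every prime `p`, the sequence `e ↦ c(p^e)` is strictly increasing in `e ≥ 1`;
moreover, for every odd prime `p`, `c(p^e)` converges to `p/(p-2)` as `e → ∞`. -/
theorem stmt4 (p : ℕ) (hp : p.Prime) :
    (∀ e : ℕ, 1 ≤ e → center (p ^ e) < center (p ^ (e + 1))) ∧
    (Odd p → Filter.Tendsto (fun e : ℕ => center (p ^ e)) Filter.atTop
      (nhds ((p : ℚ) / ((p : ℚ) - 2)))) := by
  have h2 : (2 : ℚ) ≤ (p : ℚ) := by exact_mod_cast hp.two_le
  have hp0 : (0 : ℚ) < (p : ℚ) := by linarith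
  have hr0 : (0 : ℚ) < (p : ℚ)⁻¹ := by positivity
  have hr1 : (p : ℚ)⁻¹ < 1 := by
    rw [inv_lt_one_iff₀]; right; linarith
  constructor
  · intro e _
    rw [center_prime_pow hp, center_prime_pow hp]
    have hs : (0 : ℚ) < ((p : ℚ)⁻¹) ^ e := by positivity
    have ht : ((p : ℚ)⁻¹) ^ (e + 1) < ((p : ℚ)⁻¹) ^ e :=
      pow_lt_pow_right_of_lt_one₀ hr0 hr1 (Nat.lt_succ_self e)
    have ht0 : (0 : ℚ) < ((p : ℚ)⁻¹) ^ (e + 1) := by positivity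
    rw [div_lt_div_iff₀ (by nlinarith) (by nlinarith)]
    nlinarith
  · intro hodd
    have h3 : (3 : ℚ) ≤ (p : ℚ) := by
      have : 3 ≤ p := by
        have h2' := hp.two_le
        rcases hodd with ⟨k, hk⟩
        omega
      exact_mod_cast this
    have hlim : Filter.Tendsto (fun e : ℕ => ((p : ℚ)⁻¹) ^ e) Filter.atTop (nhds 0) :=
      tendsto_pow_atTop_nhds_zero_of_lt_one hr0.le hr1
    have : Filter.Tendsto (fun e : ℕ => ((p : ℚ) - ((p : ℚ)⁻¹) ^ e) /
        (((p : ℚ) - 2) + ((p : ℚ)⁻¹) ^ e)) Filter.atTop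
        (nhds (((p : ℚ) - 0) / (((p : ℚ) - 2) + 0))) := by
      apply Filter.Tendsto.div
      · exact (tendsto_const_nhds).sub hlim
      · exact (tendsto_const_nhds).add hlim
      · intro h; rw [add_zero] at h; linarith [sub_eq_zero.mp h]
    simp only [sub_zero, add_zero] at this
    convert this using 2 with e
    exact center_prime_pow hp e
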